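/- Let H be a finite set of lines with positive integer weights w(l) = 2^{k(l)}, let w(H) = ∑_{l∈H} w(l), and suppose 2^a ≤ w(H) < 2^{a+1} and 2^b ≤ r where r = |H| ≥ 1 and b = ⌊log₂ r⌋. Define the multiset H' containing 2^{b+1+k(l)-a} copies of each l with b+1+k(l)-a ≥ 0 and one copy otherwise. If Ξ is a (1/(5√r))-cutting for the unweighted multiset H' (i.e., every triangle of Ξ is crossed by at most |H'|/(5√r) elements of H' counted with multiplicity, and |H'| ≤ 5r), then for every triangle Δ of Ξ, the total weight of the lines of H crossing Δ is at most w(H)/√r. In particular, Ξ is a (1/√r)-cutting for the weighted set (H, w). -/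

import Mathlib

open Classical
/-- If `Ξ` is a `(1/(5√r))`-cutting for the unweighted multiset `H'` obtained by
duplicating each line `l` of `H` into `max(1, 2^(b+1+k l-a))` copies (with
`2^a ≤ w(H) < 2^(a+1)`, `w l = 2^(k l)`, `2^b ≤ r ≤ 2^(b+1)`, `r = |H| ≥ 1`,
and `|H'| ≤ 5r`), then for every triangle `Δ` of `Ξ`, the total weight of the
lines of `H` crossing `Δ` is at most `w(H)/√r`; i.e. `Ξ` is a `(1/√r)`-cutting
for the weighted set `(H, w)`. -/
theorem weighted_cutting_from_unweighted {L Tri : Type*} (H : Finset L) (k : L → ℕ)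
    (r a b : ℕ) (hr : 1 ≤ r) (hcard : H.card = r)
    (hwa : 2 ^ a ≤ ∑ l ∈ H, 2 ^ (k l))
    (hwa' : ∑ l ∈ H, 2 ^ (k l) < 2 ^ (a + 1))
    (hb : 2 ^ b ≤ r) (hb' : r ≤ 2 ^ (b + 1))
    (m : L → ℕ)
    (hm : ∀ l, m l = if a ≤ b + 1 + k l then 2 ^ (b + 1 + k l - a) else 1)
    (hH' : ∑ l ∈ H, m l ≤ 5 * r)
    (Ξ : Finset Tri) (Cross : L → Tri → Prop)
    (hcut : ∀ Δ ∈ Ξ, ∑ l ∈ H.filter (fun l => Cross l Δ), (m l : ℝ)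
        ≤ (∑ l ∈ H, (m l : ℝ)) / (5 * Real.sqrt r)) :
    ∀ Δ ∈ Ξ, ∑ l ∈ H.filter (fun l => Cross l Δ), ((2 : ℝ) ^ (k l))
        ≤ (∑ l ∈ H, ((2 : ℝ) ^ (k l))) / Real.sqrt r := by

  intro Δ hΔ
  have hr1 : (1:ℝ) ≤ (r:ℝ) := by exact_mod_cast hr
  set s := Real.sqrt r with hs
  have hspos : 0 < s := Real.sqrt_pos.mpr (by linarith)
  have hs2 : s * s = (r:ℝ) := Real.mul_self_sqrt (by linarith)
  set P : ℝ := 2 ^ (b + 1) with hP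
  have hPpos : (0:ℝ) < P := by positivity
  -- pointwise key inequality
  have key : ∀ l ∈ H.filter (fun l => Cross l Δ),
      ((2:ℝ) ^ (k l)) * P ≤ (m l : ℝ) * 2 ^ a := by
    intro l _
    have hnat : 2 ^ (k l) * 2 ^ (b + 1) ≤ m l * 2 ^ a := by
      rw [hm l]
      split_ifs with h
      · apply le_of_eq
        rw [← pow_add, ← pow_add]
        congr 1
        omega
      · rw [one_mul, ← pow_add]
        exact Nat.pow_le_pow_right (by norm_num) (by omega)
    calc ((2:ℝ) ^ (k l)) * P = ((2 ^ (k l) * 2 ^ (b + 1) : ℕ) : ℝ) := by push_cast; ring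
      _ ≤ ((m l * 2 ^ a : ℕ) : ℝ) := by exact_mod_cast hnat
      _ = (m l : ℝ) * 2 ^ a := by push_cast; ring
  set A : ℝ := ∑ l ∈ H.filter (fun l => Cross l Δ), ((2:ℝ) ^ (k l)) with hA
  set B : ℝ := ∑ l ∈ H.filter (fun l => Cross l Δ), (m l : ℝ) with hB
  set M : ℝ := ∑ l ∈ H, (m l : ℝ) with hM
  set W : ℝ := ∑ l ∈ H, ((2:ℝ) ^ (k l)) with hW
  have h1 : A * P ≤ B * 2 ^ a := by
    rw [hA, hB, Finset.sum_mul, Finset.sum_mul]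
    exact Finset.sum_le_sum key
  have hBM : B ≤ M / (5 * s) := hcut Δ hΔ
  have hM5r : M ≤ 5 * (r:ℝ) := by
    rw [hM]
    calc (∑ l ∈ H, (m l : ℝ)) = ((∑ l ∈ H, m l : ℕ) : ℝ) := by push_cast; rfl
      _ ≤ ((5 * r : ℕ) : ℝ) := by exact_mod_cast hH'
      _ = 5 * (r:ℝ) := by push_cast; rfl
  have hBs : B * s ≤ (r:ℝ) := by
    have h5s : (0:ℝ) < 5 * s := by linarith
    have heq : M / (5 * s) * s = M / 5 := by field_simp
    have := mul_le_mul_of_nonneg_right hBM hspos.le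
    rw [heq] at this
    linarith
  have hrP : (r:ℝ) ≤ P := by
    rw [hP]; exact_mod_cast hb'
  have hQW : (2:ℝ) ^ a ≤ W := by
    rw [hW]
    calc (2:ℝ) ^ a = ((2 ^ a : ℕ) : ℝ) := by push_cast; rfl
      _ ≤ ((∑ l ∈ H, 2 ^ (k l) : ℕ) : ℝ) := by exact_mod_cast hwa
      _ = ∑ l ∈ H, ((2:ℝ) ^ (k l)) := by push_cast; rfl
  have hApos : 0 ≤ (2:ℝ) ^ a := by positivity
  rw [le_div_iff₀ hspos]
  -- A * s ≤ W
  have h2 : A * P * s ≤ B * 2 ^ a * s := mul_le_mul_of_nonneg_right h1 hspos.le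
  have h3 : B * 2 ^ a * s ≤ (r:ℝ) * 2 ^ a := by nlinarith
  have h4 : (r:ℝ) * 2 ^ a ≤ P * W := by nlinarith
  have h5 : A * s * P ≤ W * P := by nlinarith
  exact le_of_mul_le_mul_right h5 hPpos
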